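/- Let a, c, K_W, κ be reals with K_W > 0, κ > 0, c ∉ {−1, 0, 1}, c ≠ a, g = K_W(2a − c + a²c³ − 2a²c) + cκ(c² − 1)² with g ≠ 0, and define K* = g/(c(c² − 1)(a − c)²), Λ* = K_W(a − c)²(1 − ac)/g, K_Z* = (cκ(c² − 1)g − K_W²(a − c)²(1 − ac)²)/(c(c² − 1)g). Then K* satisfies the algebraic Riccati equation K = c²K + K_W − (K_W + cK(Λ* + c − a))² / (K_Z* + K_W + (Λ* + c − a)²K). -/

import Mathlib

/-- The triple (K*, Λ*, K_Z*) of Theorem 5 solves the algebraic Riccati equation. -/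
theorem optimal_triple_solves_ARE
    (a c KW κ : ℝ) (hKW : 0 < KW) (hκ : 0 < κ)
    (hcm1 : c ≠ -1) (hc0 : c ≠ 0) (hc1 : c ≠ 1) (hca : c ≠ a)
    (g : ℝ) (hg_def : g = KW * (2*a - c + a^2*c^3 - 2*a^2*c) + c*κ*(c^2 - 1)^2)
    (hg : g ≠ 0) :
    let Kstar := g / (c * (c^2 - 1) * (a - c)^2)
    let Λstar := KW * (a - c)^2 * (1 - a*c) / g
    let KZstar := (c*κ*(c^2 - 1)*g - KW^2*(a - c)^2*(1 - a*c)^2) / (c*(c^2 - 1)*g)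
    Kstar = c^2 * Kstar + KW
      - (KW + c*Kstar*(Λstar + c - a))^2
        / (KZstar + KW + (Λstar + c - a)^2 * Kstar) := by
  intro Kstar Λstar KZstar
  have hc2 : c^2 - 1 ≠ 0 := by
    intro h
    rcases mul_eq_zero.mp (show (c - 1) * (c + 1) = 0 by nlinarith) with h' | h'
    · exact hc1 (by linarith)
    · exact hcm1 (by linarith)
  have hac : a - c ≠ 0 := sub_ne_zero.mpr (Ne.symm hca)
  have hca' : c - a ≠ 0 := sub_ne_zero.mpr hca
  set h : ℝ := KW * (a^2*c - 2*a + c) + c*κ*(c^2 - 1) with hh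
  have hN : KW + c*Kstar*(Λstar + c - a) = h / (c - a) := by
    show KW + c * (g / (c * (c^2 - 1) * (a - c)^2)) *
        (KW * (a - c)^2 * (1 - a*c) / g + c - a) = h / (c - a)
    field_simp
    subst hg_def
    rw [hh]
    ring
  have hD : KZstar + KW + (Λstar + c - a)^2 * Kstar = c * h / (c^2 - 1) := by
    show (c*κ*(c^2 - 1)*g - KW^2*(a - c)^2*(1 - a*c)^2) / (c*(c^2 - 1)*g) + KW +
        (KW * (a - c)^2 * (1 - a*c) / g + c - a)^2 * (g / (c * (c^2 - 1) * (a - c)^2))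
        = c * h / (c^2 - 1)
    field_simp
    subst hg_def
    rw [hh]
    ring
  have hP : c^2 * Kstar + KW - Kstar = (c^2 - 1) * h / (c * (a - c)^2) := by
    show c^2 * (g / (c * (c^2 - 1) * (a - c)^2)) + KW - g / (c * (c^2 - 1) * (a - c)^2)
        = (c^2 - 1) * h / (c * (a - c)^2)
    field_simp
    subst hg_def
    rw [hh]
    ring
  rw [hN, hD]
  have key : (h / (c - a))^2 / (c * h / (c^2 - 1)) = (c^2 - 1) * h / (c * (a - c)^2) := by
    rcases eq_or_ne h 0 with h0 | h0
    · rw [h0]; simp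
    · field_simp
      ring
  rw [key]
  linarith [hP]
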